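/- The functions q(t) = (1/2)·e^{−8t³}, w(t) = e^{−24t³}, x(t) = 6t·e^{−16t³}, y(t) = 12t²·e^{−8t³} defined for t ≥ 0 satisfy the initial conditions q(0) = 1/2, w(0) = 1, x(0) = y(0) = 0 and the system of differential equations dq/dt = −y, dw/dt = −3yw/q, dx/dt = 3w/q − 2xy/q, dy/dt = 2x/q − y²/q. -/

import Mathlib

lemma exp_cube_deriv (c t : ℝ) :
    HasDerivAt (fun t => Real.exp (c * t ^ 3)) (c * (3 * t ^ 2) * Real.exp (c * t ^ 3)) t := by
  have h : HasDerivAt (fun t : ℝ => c * t ^ 3) (c * (3 * t ^ 2)) t := by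
    simpa using (hasDerivAt_pow 3 t).const_mul c
  simpa [mul_comm] using h.exp

/-- The functions `q(t) = (1/2)e^(−8t³)`, `w(t) = e^(−24t³)`,
`x(t) = 6t·e^(−16t³)`, `y(t) = 12t²·e^(−8t³)` satisfy the initial conditions
`q(0) = 1/2`, `w(0) = 1`, `x(0) = y(0) = 0` and the system of differential equations
`q' = −y`, `w' = −3yw/q`, `x' = 3w/q − 2xy/q`, `y' = 2x/q − y²/q` for `t ≥ 0`. -/
theorem heuristic_ode_solution (q w x y : ℝ → ℝ)
    (hq : ∀ t, q t = (1 / 2) * Real.exp (-8 * t ^ 3))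
    (hw : ∀ t, w t = Real.exp (-24 * t ^ 3))
    (hx : ∀ t, x t = 6 * t * Real.exp (-16 * t ^ 3))
    (hy : ∀ t, y t = 12 * t ^ 2 * Real.exp (-8 * t ^ 3)) :
    q 0 = 1 / 2 ∧ w 0 = 1 ∧ x 0 = 0 ∧ y 0 = 0 ∧
    ∀ t : ℝ, 0 ≤ t →
      HasDerivAt q (-y t) t ∧
      HasDerivAt w (-3 * y t * w t / q t) t ∧
      HasDerivAt x (3 * w t / q t - 2 * x t * y t / q t) t ∧
      HasDerivAt y (2 * x t / q t - (y t) ^ 2 / q t) t := by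
  have hq' : q = fun t => (1 / 2) * Real.exp (-8 * t ^ 3) := funext hq
  have hw' : w = fun t => Real.exp (-24 * t ^ 3) := funext hw
  have hx' : x = fun t => 6 * t * Real.exp (-16 * t ^ 3) := funext hx
  have hy' : y = fun t => 12 * t ^ 2 * Real.exp (-8 * t ^ 3) := funext hy
  subst hq' hw' hx' hy'
  refine ⟨by norm_num, by norm_num, by norm_num, by norm_num, fun t ht => ?_⟩
  have hne : Real.exp (-8 * t ^ 3) ≠ 0 := Real.exp_ne_zero _
  have key : Real.exp (-(16 * t ^ 3)) = Real.exp (-(8 * t ^ 3)) * Real.exp (-(8 * t ^ 3)) := by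
    rw [← Real.exp_add]; ring_nf
  have key2 : Real.exp (-(24 * t ^ 3)) =
      Real.exp (-(16 * t ^ 3)) * Real.exp (-(8 * t ^ 3)) := by
    rw [← Real.exp_add]; ring_nf
  refine ⟨?_, ?_, ?_, ?_⟩
  · have := (exp_cube_deriv (-8) t).const_mul (1/2 : ℝ)
    refine this.congr_deriv ?_
    ring
  · have := exp_cube_deriv (-24) t
    refine this.congr_deriv ?_
    field_simp
    ring
  · have := (hasDerivAt_id t).const_mul (6 : ℝ) |>.mul (exp_cube_deriv (-16) t)
    refine this.congr_deriv ?_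
    field_simp
    rw [show t ^ 3 * 24 = 24 * t ^ 3 by ring, show t ^ 3 * 8 = 8 * t ^ 3 by ring, key2, key, id]
    ring
  · have h1 : HasDerivAt (fun t : ℝ => 12 * t ^ 2) (12 * (2 * t)) t := by
      simpa using (hasDerivAt_pow 2 t).const_mul (12 : ℝ)
    have := h1.mul (exp_cube_deriv (-8) t)
    refine this.congr_deriv ?_
    field_simp
    rw [show t ^ 3 * 16 = 16 * t ^ 3 by ring, show t ^ 3 * 8 = 8 * t ^ 3 by ring, key]
    ring
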